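/- Let F be a field, d >= 1, and work in the free associative F-algebra on 2d generators y_1,...,y_d, z_1,...,z_d. Let HARD_d be the noncommutative polynomial that is the sum, over all subsets S of {1,...,d}, of the word formed by the product of the y_i for i in S in increasing order of i, followed by the product of the z_j for j in the complement of S in increasing order of j. For 0 <= k <= d, let M_k(HARD_d) be the matrix whose rows are indexed by words of length k over the 2d generators, whose columns are indexed by words of length d - k over the 2d generators, and whose entry at row u and column v is the coefficient in HARD_d of the concatenated word u*v. Then for every 0 <= k <= d, the rank of M_k(HARD_d) over F is at least the binomial coefficient C(d,k). -/

import Mathlib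

/-- The coefficient of a noncommutative polynomial (element of the free associative algebra)
at a word, via the identification with the monoid algebra of the free monoid. -/
noncomputable def ncCoeff {F : Type*} [CommSemiring F] {X : Type*}
    (x : FreeAlgebra F X) (w : FreeMonoid X) : F :=
  (FreeAlgebra.equivMonoidAlgebraFreeMonoid x).coeff w

/-- Nisan's hard polynomial `HARD_d`: the ordered representative of `∏ i, (y_i + z_i)`,
i.e. the sum over all subsets `S ⊆ {1,…,d}` of the product of the `y_i, i ∈ S` in
increasing order followed by the product of the `z_j, j ∈ Sᶜ` in increasing order
(with `y` the left copy and `z` the right copy of `Fin d`). -/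
noncomputable def HARD (F : Type*) [Field F] (d : ℕ) : FreeAlgebra F (Fin d ⊕ Fin d) :=
  ∑ S : Finset (Fin d),
    ((S.sort (· ≤ ·)).map (fun i => FreeAlgebra.ι F (Sum.inl i : Fin d ⊕ Fin d))).prod *
      ((Sᶜ.sort (· ≤ ·)).map (fun j => FreeAlgebra.ι F (Sum.inr j : Fin d ⊕ Fin d))).prod

/-- Nisan's partial derivatives matrix `M_k(HARD_d)`: rows indexed by words of length `k`
over the `2d` generators, columns by words of length `d - k`, with `(u,v)` entry the
coefficient of the concatenated word `u * v` in `HARD_d`. -/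
noncomputable def nisanMatrix (F : Type*) [Field F] (d k : ℕ) :
    Matrix (List.Vector (Fin d ⊕ Fin d) k) (List.Vector (Fin d ⊕ Fin d) (d - k)) F :=
  fun u v => ncCoeff (HARD F d) (FreeMonoid.ofList u.toList * FreeMonoid.ofList v.toList)

open Finset

section aux

variable {F : Type*} [CommSemiring F] {X : Type*}

lemma equiv_listProd (l : List X) :
    FreeAlgebra.equivMonoidAlgebraFreeMonoid ((l.map (FreeAlgebra.ι F)).prod) =
      MonoidAlgebra.single (FreeMonoid.ofList l) (1 : F) := by
  induction l with
  | nil =>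
      simp only [List.map_nil, List.prod_nil, map_one]
      rfl
  | cons a l ih =>
      have h : FreeAlgebra.equivMonoidAlgebraFreeMonoid (FreeAlgebra.ι F a) =
          MonoidAlgebra.single (FreeMonoid.of a) (1 : F) := by
        simp [FreeAlgebra.equivMonoidAlgebraFreeMonoid, FreeAlgebra.lift_ι_apply]
      simp only [List.map_cons, List.prod_cons, map_mul, ih, h,
        MonoidAlgebra.single_mul_single, one_mul, FreeMonoid.ofList_cons]

end aux

/-- The word attached to `S`. -/
def wordOf {d : ℕ} (S : Finset (Fin d)) : FreeMonoid (Fin d ⊕ Fin d) :=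
  FreeMonoid.ofList ((S.sort (· ≤ ·)).map Sum.inl ++ (Sᶜ.sort (· ≤ ·)).map Sum.inr)

lemma wordOf_inj {d : ℕ} {S T : Finset (Fin d)} (h : wordOf S = wordOf T) : S = T := by
  have hl : (S.sort (· ≤ ·)).map Sum.inl ++ (Sᶜ.sort (· ≤ ·)).map Sum.inr
      = (T.sort (· ≤ ·)).map Sum.inl ++ (Tᶜ.sort (· ≤ ·)).map Sum.inr := h
  have := congrArg (List.filterMap (Sum.getLeft? (β := Fin d))) hl
  have hnil : ∀ l : List (Fin d), List.filterMap (fun _ : Fin d => (none : Option (Fin d))) l = [] := by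
    intro l; simp
  simp [List.filterMap_append, List.filterMap_map, Function.comp_def, Sum.getLeft?, hnil] at this
  have hh := congrArg List.toFinset this
  simpa only [Finset.sort_toFinset] using hh

open scoped Classical in
lemma ncCoeff_HARD {F : Type*} [Field F] {d : ℕ} (w : FreeMonoid (Fin d ⊕ Fin d)) :
    ncCoeff (HARD F d) w = ∑ S : Finset (Fin d), if wordOf S = w then (1 : F) else 0 := by
  classical
  unfold ncCoeff HARD
  rw [map_sum]
  rw [MonoidAlgebra.coeff_sum, Finsupp.finset_sum_apply]
  refine Finset.sum_congr rfl fun S _ => ?_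
  rw [map_mul]
  rw [show (fun i => FreeAlgebra.ι F (Sum.inl i : Fin d ⊕ Fin d)) =
        (FreeAlgebra.ι F) ∘ (Sum.inl : Fin d → Fin d ⊕ Fin d) from rfl,
      show (fun j => FreeAlgebra.ι F (Sum.inr j : Fin d ⊕ Fin d)) =
        (FreeAlgebra.ι F) ∘ (Sum.inr : Fin d → Fin d ⊕ Fin d) from rfl,
      ← List.map_map, ← List.map_map, equiv_listProd, equiv_listProd,
      MonoidAlgebra.single_mul_single, one_mul]
  rw [MonoidAlgebra.coeff_single, Finsupp.single_apply, ← FreeMonoid.ofList_append]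
  rfl

/-- For every `0 ≤ k ≤ d`, the rank over `F` of Nisan's matrix `M_k(HARD_d)` is at least
the binomial coefficient `C(d,k)`. -/
theorem nisanMatrix_rank_ge (F : Type*) [Field F] (d : ℕ) (hd : 1 ≤ d)
    (k : ℕ) (hk : k ≤ d) :
    d.choose k ≤ (nisanMatrix F d k).rank := by
  classical
  set M := nisanMatrix F d k with hM
  let I := {S : Finset (Fin d) // S.card = k}
  let r : I → List.Vector (Fin d ⊕ Fin d) k := fun A =>
    ⟨(A.1.sort (· ≤ ·)).map Sum.inl, by
      rw [List.length_map, Finset.length_sort, A.2]⟩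
  let c : I → List.Vector (Fin d ⊕ Fin d) (d - k) := fun B =>
    ⟨(B.1ᶜ.sort (· ≤ ·)).map Sum.inr, by
      rw [List.length_map, Finset.length_sort, Finset.card_compl, Fintype.card_fin, B.2]⟩
  have entry : ∀ A B : I, M (r A) (c B) = if A = B then (1 : F) else 0 := by
    intro A B
    have hMe : M (r A) (c B) = ncCoeff (HARD F d)
        (FreeMonoid.ofList ((A.1.sort (· ≤ ·)).map Sum.inl ++ (B.1ᶜ.sort (· ≤ ·)).map Sum.inr)) :=
      rfl
    rw [hMe, ncCoeff_HARD]
    have hiff : ∀ S : Finset (Fin d),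
        wordOf S = FreeMonoid.ofList ((A.1.sort (· ≤ ·)).map Sum.inl
          ++ (B.1ᶜ.sort (· ≤ ·)).map Sum.inr) ↔ S = A.1 ∧ S = B.1 := by
      intro S
      constructor
      · intro h
        have hl : (S.sort (· ≤ ·)).map Sum.inl ++ (Sᶜ.sort (· ≤ ·)).map Sum.inr
            = (A.1.sort (· ≤ ·)).map Sum.inl ++ (B.1ᶜ.sort (· ≤ ·)).map Sum.inr := h
        have h1 := congrArg (List.filterMap (Sum.getLeft? (β := Fin d))) hl
        have hnil : ∀ l : List (Fin d),
            List.filterMap (fun _ : Fin d => (none : Option (Fin d))) l = [] := by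
          intro l; simp
        simp [List.filterMap_append, List.filterMap_map, Function.comp_def,
          Sum.getLeft?, hnil] at h1
        have hSA : S = A.1 := by
          have := congrArg List.toFinset h1
          simpa only [Finset.sort_toFinset] using this
        refine ⟨hSA, ?_⟩
        rw [hSA] at hl
        have h2 := List.append_cancel_left hl
        have h3 : A.1ᶜ.sort (· ≤ ·) = B.1ᶜ.sort (· ≤ ·) :=
          List.map_injective_iff.mpr Sum.inr_injective h2
        have h4 : A.1ᶜ = B.1ᶜ := by
          have := congrArg List.toFinset h3
          simpa only [Finset.sort_toFinset] using this
        exact hSA.trans (compl_injective h4)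
      · rintro ⟨rfl, h2⟩
        unfold wordOf
        rw [← h2]
    by_cases hAB : A = B
    · subst hAB
      simp only [hiff, and_self, if_pos rfl]
      rw [Finset.sum_ite_eq' Finset.univ A.1 (fun _ => (1 : F))]
      simp
    · rw [if_neg hAB, Finset.sum_eq_zero]
      intro S _
      rw [if_neg]
      rw [hiff]
      rintro ⟨rfl, h2⟩
      exact hAB (Subtype.ext h2)
  let P : Matrix I (List.Vector (Fin d ⊕ Fin d) k) F := fun A u => if u = r A then 1 else 0
  let Q : Matrix (List.Vector (Fin d ⊕ Fin d) (d - k)) I F := fun v B => if v = c B then 1 else 0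
  have key : P * (M * Q) = 1 := by
    ext A B
    simp only [Matrix.mul_apply]
    simp only [Matrix.mul_apply, P, Q, ite_mul, mul_ite, zero_mul, one_mul, mul_zero, mul_one,
      Finset.sum_ite_eq', Finset.mem_univ, if_pos]
    rw [entry A B, Matrix.one_apply]
  have hcard : Fintype.card I = d.choose k := by
    rw [Fintype.card_finset_len, Fintype.card_fin]
  calc d.choose k = (1 : Matrix I I F).rank := by rw [Matrix.rank_one, hcard]
    _ = (P * (M * Q)).rank := by rw [key]
    _ ≤ (M * Q).rank := Matrix.rank_mul_le_right _ _
    _ ≤ M.rank := Matrix.rank_mul_le_left _ _
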